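/- Let α, ε ∈ ℝ and let (x,y) ∈ ℝ² satisfy 1 − 3ε²x ≠ 0. Define x̃ = (x + εy − ε²α/2)/(1 − 3ε²x) and ỹ = (y + ε(6x² − α) + 3ε²xy)/(1 − 3ε²x), and assume also 1 − 3ε²x̃ ≠ 0. Then the function I(x,y) = (y² − 4x³ + 2αx + ε²x(y² − 2αx) − ε⁴α²x)/(1 − 3ε²x) is a conserved quantity: I(x̃,ỹ) = I(x,y). -/

import Mathlib

set_option maxHeartbeats 1000000 in
/-- Conserved quantity of the Kahan–Hirota–Kimura discretization of the
Weierstrass system `ẋ = y`, `ẏ = 6x² - α`. -/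
theorem weierstrass_kahan_integral (α ε x y xt yt : ℝ)
    (hxt : xt = (x + ε * y - ε ^ 2 * α / 2) / (1 - 3 * ε ^ 2 * x))
    (hyt : yt = (y + ε * (6 * x ^ 2 - α) + 3 * ε ^ 2 * x * y) / (1 - 3 * ε ^ 2 * x))
    (h : 1 - 3 * ε ^ 2 * x ≠ 0)
    (ht : 1 - 3 * ε ^ 2 * xt ≠ 0) :
    (yt ^ 2 - 4 * xt ^ 3 + 2 * α * xt + ε ^ 2 * xt * (yt ^ 2 - 2 * α * xt)
        - ε ^ 4 * α ^ 2 * xt) / (1 - 3 * ε ^ 2 * xt)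
      = (y ^ 2 - 4 * x ^ 3 + 2 * α * x + ε ^ 2 * x * (y ^ 2 - 2 * α * x)
        - ε ^ 4 * α ^ 2 * x) / (1 - 3 * ε ^ 2 * x) := by
  rw [div_eq_div_iff ht h]
  subst hxt hyt
  have h' : 1 - ε ^ 2 * x * 3 ≠ 0 := by convert h using 1; ring
  field_simp
  ring
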